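/- For every l ≥ 1 and every injection θ : ℤ/lℤ → (ℕ_{>0})^n, the cyclic minor M_θ satisfies ‖M_θ‖ ≤ p^{−m·l·δ_p(D)}. -/

import Mathlib

open scoped BigOperators
open scoped Classical

/-- `sp p u` is the sum of the base-`p` digits of `u`. -/
def sp (p u : ℕ) : ℕ := (Nat.digits p u).sum

variable {ι : Type} [Fintype ι]

/-- The coordinatewise sum `Σ_{d ∈ D} u_d · d`. -/
def sigmaSum (D : Finset (ι → ℕ)) (U : D → ℕ) (k : ι) : ℕ :=
  ∑ d, U d * (d : ι → ℕ) k

/-- Membership in the set `E_{D,p}(r)`. -/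
def memE (p : ℕ) (D : Finset (ι → ℕ)) (r : ℕ) (U : D → ℕ) : Prop :=
  (∀ d, U d ≤ p ^ r - 1) ∧
  (∀ k, (p ^ r - 1) ∣ sigmaSum D U k ∧ 0 < sigmaSum D U k)

/-- The `p`-weight `s_p(U)` of a tuple `U`. -/
def spU (p : ℕ) (D : Finset (ι → ℕ)) (U : D → ℕ) : ℕ := ∑ d, sp p (U d)

/-- `s_{D,p}(r)`, the minimal `p`-weight of an element of `E_{D,p}(r)`. -/
noncomputable def sDp (p : ℕ) (D : Finset (ι → ℕ)) (r : ℕ) : ℕ :=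
  sInf { s | ∃ U : D → ℕ, memE p D r U ∧ spU p D U = s }

/-- The `p`-density `δ_p(D)` of the set `D`. -/
noncomputable def density (p : ℕ) (D : Finset (ι → ℕ)) : ℝ :=
  (1 / ((p : ℝ) - 1)) * sInf { x : ℝ | ∃ r : ℕ, 1 ≤ r ∧ x = (sDp p D r : ℝ) / (r : ℝ) }

/-- A minimal solution in `E_{D,p}(r)`. -/
def minimalSol (p : ℕ) (D : Finset (ι → ℕ)) (r : ℕ) (U : D → ℕ) : Prop :=
  memE p D r U ∧ (spU p D U : ℝ) = ((p : ℝ) - 1) * (r : ℝ) * density p D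

/-- `φ_r(U) = (1/(p^r − 1)) Σ_{d ∈ D} u_d · d`. -/
def phiMap (p : ℕ) (D : Finset (ι → ℕ)) (r : ℕ) (U : D → ℕ) (k : ι) : ℕ :=
  sigmaSum D U k / (p ^ r - 1)

/-- The shift `δ_r` on `{0, …, p^r − 1}`. -/
def shiftFun (p r u : ℕ) : ℕ := if u = p ^ r - 1 then u else (p * u) % (p ^ r - 1)

/-- The componentwise action of the shift `δ_r` on tuples. -/
def shiftE (p : ℕ) (D : Finset (ι → ℕ)) (r : ℕ) (U : D → ℕ) : D → ℕ :=
  fun d => shiftFun p r (U d)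

/-- The support `φ_U : ℤ/rℤ → ℕ^n` of a solution `U ∈ E_{D,p}(r)`. -/
def suppMap (p : ℕ) (D : Finset (ι → ℕ)) (r : ℕ) (U : D → ℕ) (k : ZMod r) : ι → ℕ :=
  phiMap p D r ((shiftE p D r)^[k.val] U)

/-- Membership in `MI_{D,p}(r)`: minimal irreducible solutions. -/
def memMI (p : ℕ) (D : Finset (ι → ℕ)) (r : ℕ) (U : D → ℕ) : Prop :=
  minimalSol p D r U ∧ Function.Injective (suppMap p D r U)

/-- The `p`-minimal support `Σ_p(D)`. -/
def minSupport (p : ℕ) (D : Finset (ι → ℕ)) : Set (ι → ℕ) :=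
  { e | ∃ r : ℕ, 1 ≤ r ∧ ∃ U : D → ℕ, memMI p D r U ∧ e ∈ Set.range (suppMap p D r U) }

/-- `ψ(U)`: the tuple of last base-`p` digits of `U`. -/
def psiMap (p : ℕ) (D : Finset (ι → ℕ)) (U : D → ℕ) : D → ℕ := fun d => U d % p

/-- The set `V(e, e')` of digit tuples of minimal irreducible solutions with
`φ_U(−1) = e` and `φ_U(0) = e'`. -/
def Vset (p : ℕ) (D : Finset (ι → ℕ)) (e e' : ι → ℕ) : Set (D → ℕ) :=
  { v | ∃ r : ℕ, 1 ≤ r ∧ ∃ U : D → ℕ, memMI p D r U ∧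
      suppMap p D r U (-1) = e ∧ suppMap p D r U 0 = e' ∧ psiMap p D U = v }

/-- The weight `w(V) = Σ_{d ∈ D} v_d`. -/
def weightV (D : Finset (ι → ℕ)) (v : D → ℕ) : ℕ := ∑ d, v d

/-- The coefficient `λ^{(m)}_u = Σ_{r+q·s=u} (−1)^s π^{r+s}/(r!·s!)` of the
splitting function `θ_m(X) = exp(πX − πX^q)`, where `q = p^m`. -/
noncomputable def lam {K : Type} [Field K] (p m : ℕ) (π : K) (u : ℕ) : K :=
  ∑ s ∈ Finset.range (u / p ^ m + 1),
    (-1 : K) ^ s * π ^ (u - p ^ m * s + s) /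
      (((u - p ^ m * s).factorial : K) * (s.factorial : K))

/-- The coefficient `f^{(m)}_i(Γ) = Σ_{Σ_d u_d·d = i} Π_d λ^{(m)}_{u_d} γ_d^{u_d}`
of the series `F_m(Γ, X)`.  (Since `0 ∉ D`, any solution of `Σ_d u_d·d = i`
satisfies `u_d ≤ Σ_k i_k` for every `d`, so the sum below ranges over all
solutions.) -/
noncomputable def fcoef {K : Type} [Field K] {ι : Type} [Fintype ι]
    (p m : ℕ) (π : K) (D : Finset (ι → ℕ)) (γ : D → K) (i : ι → ℕ) : K :=
  ∑ u ∈ (Fintype.piFinset fun _ : D => Finset.range ((∑ k, i k) + 1)) |>.filter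
      (fun u : D → ℕ => ∀ k, sigmaSum D u k = i k),
    ∏ d, lam p m π (u d) * γ d ^ u d

/-- `f^{(m)}_i(Γ)` for `i ∈ ℤ^n`: it is `0` whenever `i` has a negative
coordinate. -/
noncomputable def fcoefZ {K : Type} [Field K] {ι : Type} [Fintype ι]
    (p m : ℕ) (π : K) (D : Finset (ι → ℕ)) (γ : D → K) (i : ι → ℤ) : K :=
  if ∀ k, 0 ≤ i k then fcoef p m π D γ (fun k => (i k).toNat) else 0


section CyclicMinorHelpers
set_option linter.unusedSectionVars false

lemma sp_eq {p : ℕ} (hp2 : 2 ≤ p) (a : ℕ) : sp p a = a % p + sp p (a / p) := by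
  rcases Nat.eq_zero_or_pos a with rfl | ha
  · simp [sp]
  · rw [sp, Nat.digits_def' (by omega : 1 < p) ha]; rfl

lemma sp_pow_mul {p : ℕ} (hp2 : 2 ≤ p) (k a : ℕ) : sp p (p ^ k * a) = sp p a := by
  induction k with
  | zero => simp
  | succ k ih =>
    have : p ^ (k+1) * a = p * (p ^ k * a) := by ring
    rw [this, sp_eq hp2, Nat.mul_mod_right, Nat.mul_div_cancel_left _ (by omega : 0 < p), ih, Nat.zero_add]

lemma sp_split {p : ℕ} (hp2 : 2 ≤ p) (r n : ℕ) :
    sp p n = sp p (n % p ^ r) + sp p (n / p ^ r) := by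
  induction r generalizing n with
  | zero => simp [sp, Nat.mod_one]
  | succ r ih =>
    have e1 : n % p ^ (r+1) % p = n % p := Nat.mod_mod_of_dvd n (dvd_pow_self p (by omega))
    have e2 : n % p ^ (r+1) / p = n / p % p ^ r := by
      rw [pow_succ']; exact Nat.mod_mul_right_div_self n p (p ^ r)
    have e3 : n / p ^ (r+1) = n / p / p ^ r := by
      rw [Nat.div_div_eq_div_mul, pow_succ']
    rw [sp_eq hp2 n, ih (n / p), sp_eq hp2 (n % p ^ (r+1)), e1, e2, e3, add_assoc]

lemma sp_add_le {p : ℕ} (hp : p.Prime) (a b : ℕ) : sp p (a + b) ≤ sp p a + sp p b := by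
  haveI : Fact p.Prime := ⟨hp⟩
  have la := sub_one_mul_padicValNat_factorial (p := p) a
  have lb := sub_one_mul_padicValNat_factorial (p := p) b
  have lab := sub_one_mul_padicValNat_factorial (p := p) (a + b)
  have hva : sp p a ≤ a := Nat.digit_sum_le p a
  have hvb : sp p b ≤ b := Nat.digit_sum_le p b
  have hvab : sp p (a+b) ≤ a + b := Nat.digit_sum_le p (a+b)
  have hdvd : padicValNat p a.factorial + padicValNat p b.factorial
      ≤ padicValNat p (a+b).factorial := by
    rw [← padicValNat_dvd_iff_le (Nat.factorial_ne_zero _), pow_add]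
    exact dvd_trans (mul_dvd_mul pow_padicValNat_dvd pow_padicValNat_dvd)
      (Nat.factorial_mul_factorial_dvd_factorial_add a b)
  have hh := Nat.mul_le_mul_left (p - 1) hdvd
  rw [Nat.mul_add] at hh
  unfold sp at *
  omega

lemma sp_sum_le {p : ℕ} (hp : p.Prime) {α : Type*} (s : Finset α) (f : α → ℕ) :
    sp p (∑ i ∈ s, f i) ≤ ∑ i ∈ s, sp p (f i) := by
  classical
  induction s using Finset.cons_induction with
  | empty => simp [sp]
  | cons a s ha ih =>
    rw [Finset.sum_cons, Finset.sum_cons]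
    exact le_trans (sp_add_le hp _ _) (by omega)

lemma fold_exists {p : ℕ} (hp : p.Prime) {r : ℕ} (hr : 1 ≤ r) (n : ℕ) :
    ∃ n' : ℕ, n' ≤ p ^ r - 1 ∧ n' ≡ n [MOD p ^ r - 1] ∧ sp p n' ≤ sp p n ∧
      (n' = 0 ↔ n = 0) := by
  have hp2 : 2 ≤ p := hp.two_le
  have hpr : 2 ≤ p ^ r := by
    calc (2:ℕ) = 2 ^ 1 := rfl
    _ ≤ p ^ 1 := Nat.pow_le_pow_left hp2 1
    _ ≤ p ^ r := Nat.pow_le_pow_right (by omega) hr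
  induction n using Nat.strong_induction_on with
  | _ n ih =>
    by_cases hn : n ≤ p ^ r - 1
    · exact ⟨n, hn, Nat.ModEq.refl n, le_refl _, Iff.rfl⟩
    · push_neg at hn
      have hnab : p ^ r * (n / p ^ r) + n % p ^ r = n := Nat.div_add_mod n (p ^ r)
      have hble : 1 ≤ n / p ^ r :=
        (Nat.one_le_div_iff (by omega)).mpr (by omega)
      have h2b : 2 * (n / p ^ r) ≤ p ^ r * (n / p ^ r) :=
        Nat.mul_le_mul_right _ hpr
      have hWlt : n % p ^ r + n / p ^ r < n := by omega
      have hmod : n % p ^ r + n / p ^ r ≡ n [MOD p ^ r - 1] := by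
        have h1 : (1 : ℕ) ≡ p ^ r [MOD p ^ r - 1] :=
          (Nat.modEq_iff_dvd' (by omega)).mpr dvd_rfl
        calc n % p ^ r + n / p ^ r = n % p ^ r + 1 * (n / p ^ r) := by ring
        _ ≡ n % p ^ r + p ^ r * (n / p ^ r) [MOD p ^ r - 1] :=
            Nat.ModEq.add_left _ (h1.mul_right _)
        _ = n := by omega
      have hsp : sp p (n % p ^ r + n / p ^ r) ≤ sp p n := by
        rw [sp_split hp2 r n]; exact sp_add_le hp _ _
      obtain ⟨n', h1, h2, h3, h4⟩ := ih _ hWlt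
      refine ⟨n', h1, h2.trans hmod, h3.trans hsp, ?_⟩
      have hW0 : n % p ^ r + n / p ^ r ≠ 0 := (Nat.add_pos_right (n % p ^ r) hble).ne'
      have hn0 : n ≠ 0 := by omega
      exact iff_of_false (fun h => hW0 (h4.mp h)) hn0

variable {K : Type} [NormedField K] [CharZero K] {p m : ℕ} {π : K}

lemma norm_coprime_one (hp : p.Prime) (hna : IsUltrametricDist K)
    (hpnorm : ‖(p : K)‖ = (p : ℝ)⁻¹) {c : ℕ} (hc : ¬ p ∣ c) : ‖(c : K)‖ = 1 := by
  haveI := hna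
  have h1 : ‖(c : K)‖ ≤ 1 := IsUltrametricDist.norm_natCast_le_one K c
  refine le_antisymm h1 ?_
  by_contra hlt
  push_neg at hlt
  have hcop : IsCoprime (p : ℤ) (c : ℤ) := by
    rw [Int.isCoprime_iff_gcd_eq_one, Int.gcd_natCast_natCast]
    exact hp.coprime_iff_not_dvd.mpr hc
  obtain ⟨a, b, hab⟩ := hcop
  have h2 : (1 : K) = (a : K) * (p : K) + (b : K) * (c : K) := by
    have := congrArg (fun z : ℤ => (z : K)) hab
    push_cast at this
    exact this.symm
  have hplt : ‖(p : K)‖ < 1 := by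
    rw [hpnorm, inv_lt_one_iff₀]
    right; exact_mod_cast hp.one_lt
  have ha1 : ‖(a : K)‖ ≤ 1 := IsUltrametricDist.norm_intCast_le_one K a
  have hb1 : ‖(b : K)‖ ≤ 1 := IsUltrametricDist.norm_intCast_le_one K b
  have hcontra : (1 : ℝ) < 1 := by
    calc (1:ℝ) = ‖(1 : K)‖ := by simp
    _ = ‖(a : K) * (p : K) + (b : K) * (c : K)‖ := by rw [← h2]
    _ ≤ max (‖(a : K) * (p : K)‖) (‖(b : K) * (c : K)‖) :=
        IsUltrametricDist.norm_add_le_max _ _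
    _ < 1 := by
        rw [max_lt_iff, norm_mul, norm_mul]
        exact ⟨lt_of_le_of_lt (mul_le_of_le_one_left (norm_nonneg _) ha1) hplt,
          lt_of_le_of_lt (mul_le_of_le_one_left (norm_nonneg _) hb1) hlt⟩
  exact absurd hcontra (lt_irrefl 1)

lemma norm_natCast_eq (hp : p.Prime) (hna : IsUltrametricDist K)
    (hpnorm : ‖(p : K)‖ = (p : ℝ)⁻¹) {n : ℕ} (hn : n ≠ 0) :
    ‖(n : K)‖ = (p : ℝ) ^ (-(padicValNat p n : ℝ)) := by
  haveI : Fact p.Prime := ⟨hp⟩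
  have hP : (0 : ℝ) < p := by exact_mod_cast hp.pos
  have hsplit : p ^ (padicValNat p n) * (n / p ^ n.factorization p) = n := by
    rw [← Nat.factorization_def n hp]
    exact Nat.ordProj_mul_ordCompl_eq_self n p
  have hc : ¬ p ∣ (n / p ^ n.factorization p) := Nat.not_dvd_ordCompl hp hn
  calc ‖(n : K)‖ = ‖((p ^ (padicValNat p n) * (n / p ^ n.factorization p) : ℕ) : K)‖ := by rw [hsplit]
  _ = ‖(p : K)‖ ^ (padicValNat p n) * ‖(((n / p ^ n.factorization p) : ℕ) : K)‖ := by
        push_cast; rw [norm_mul, norm_pow]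
  _ = ((p:ℝ)⁻¹) ^ (padicValNat p n) := by
        rw [hpnorm, norm_coprime_one hp hna hpnorm hc, mul_one]
  _ = (p : ℝ) ^ (-(padicValNat p n : ℝ)) := by
        rw [Real.rpow_neg hP.le, Real.rpow_natCast, inv_pow]

lemma norm_pi_eq (hp : p.Prime) (hpnorm : ‖(p : K)‖ = (p : ℝ)⁻¹)
    (hπ : π ^ (p - 1) = -(p : K)) :
    ‖π‖ = (p : ℝ) ^ (-(1 / ((p : ℝ) - 1))) := by
  have hp2 : 2 ≤ p := hp.two_le
  have hP1 : (1 : ℝ) < (p : ℝ) := by exact_mod_cast hp.one_lt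
  have hP0 : (0 : ℝ) < (p : ℝ) := by linarith
  have hpow : ‖π‖ ^ (p - 1) = (p : ℝ)⁻¹ := by
    rw [← norm_pow, hπ, norm_neg, hpnorm]
  have hcast : ((p - 1 : ℕ) : ℝ) = (p : ℝ) - 1 := by
    push_cast [Nat.cast_sub (by omega : 1 ≤ p)]; ring
  have hne : ((p - 1 : ℕ) : ℝ) ≠ 0 := by rw [hcast]; linarith
  have key : ‖π‖ = (‖π‖ ^ (p - 1)) ^ (((p - 1 : ℕ) : ℝ))⁻¹ := by
    rw [← Real.rpow_natCast ‖π‖ (p - 1), ← Real.rpow_mul (norm_nonneg π),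
      mul_inv_cancel₀ hne, Real.rpow_one]
  rw [key, hpow, ← Real.rpow_neg_one (p : ℝ), ← Real.rpow_mul hP0.le, hcast]
  norm_num

lemma norm_lam_le (hp : p.Prime) (hna : IsUltrametricDist K)
    (hpnorm : ‖(p : K)‖ = (p : ℝ)⁻¹)
    (hπ : π ^ (p - 1) = -(p : K)) (u : ℕ) :
    ‖lam p m π u‖ ≤ (p : ℝ) ^ (-(sp p u : ℝ) / ((p : ℝ) - 1)) := by
  haveI := hna
  haveI : Fact p.Prime := ⟨hp⟩
  have hp2 : 2 ≤ p := hp.two_le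
  have hP1 : (1 : ℝ) < (p : ℝ) := by exact_mod_cast hp.one_lt
  have hP0 : (0 : ℝ) < (p : ℝ) := by linarith
  have hB0 : (0:ℝ) ≤ (p : ℝ) ^ (-(sp p u : ℝ) / ((p : ℝ) - 1)) := (Real.rpow_pos_of_pos hP0 _).le
  apply IsUltrametricDist.norm_sum_le_of_forall_le_of_nonneg hB0
  intro s hs
  rw [Finset.mem_range] at hs
  have hqs : p ^ m * s ≤ u := by
    have : s ≤ u / p ^ m := by omega
    exact le_trans (Nat.mul_le_mul_left _ this) (Nat.mul_div_le u (p ^ m) |>.trans_eq (by ring_nf))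
  set r := u - p ^ m * s with hrdef
  have hru : r + p ^ m * s = u := by omega
  -- digit sum inequality
  have hsp : sp p u ≤ sp p r + sp p s := by
    calc sp p u = sp p (r + p ^ m * s) := by rw [hru]
    _ ≤ sp p r + sp p (p ^ m * s) := sp_add_le hp _ _
    _ = sp p r + sp p s := by rw [sp_pow_mul hp2]
  -- compute the norm of the term
  have hnorm : ‖(-1 : K) ^ s * π ^ (r + s) / (((r.factorial : ℕ) : K) * ((s.factorial : ℕ) : K))‖
      = (p : ℝ) ^ ((-(r + s : ℝ) / ((p:ℝ) - 1)) + (padicValNat p r.factorial : ℝ)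
          + (padicValNat p s.factorial : ℝ)) := by
    rw [norm_div, norm_mul, norm_mul, norm_pow, norm_pow, norm_neg, norm_one, one_pow, one_mul,
      norm_pi_eq hp hpnorm hπ,
      norm_natCast_eq hp hna hpnorm (Nat.factorial_ne_zero r),
      norm_natCast_eq hp hna hpnorm (Nat.factorial_ne_zero s),
      ← Real.rpow_natCast ((p:ℝ) ^ (-(1 / ((p : ℝ) - 1)))) (r + s),
      ← Real.rpow_mul hP0.le, ← Real.rpow_add hP0, ← Real.rpow_sub hP0]
    congr 1
    push_cast
    ring
  have hexp : (-(r + s : ℝ) / ((p:ℝ) - 1)) + (padicValNat p r.factorial : ℝ)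
      + (padicValNat p s.factorial : ℝ) ≤ -(sp p u : ℝ) / ((p : ℝ) - 1) := by
    have lr : (p - 1) * padicValNat p r.factorial = r - sp p r := by
      unfold sp; exact sub_one_mul_padicValNat_factorial r
    have ls : (p - 1) * padicValNat p s.factorial = s - sp p s := by
      unfold sp; exact sub_one_mul_padicValNat_factorial s
    have hsr : sp p r ≤ r := Nat.digit_sum_le p r
    have hss : sp p s ≤ s := Nat.digit_sum_le p s
    have lr' : ((p:ℝ) - 1) * (padicValNat p r.factorial : ℝ) = (r : ℝ) - sp p r := by
      have := congrArg (fun z : ℕ => (z : ℝ)) lr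
      push_cast [Nat.cast_sub (by omega : 1 ≤ p), Nat.cast_sub hsr] at this
      linarith [this]
    have ls' : ((p:ℝ) - 1) * (padicValNat p s.factorial : ℝ) = (s : ℝ) - sp p s := by
      have := congrArg (fun z : ℕ => (z : ℝ)) ls
      push_cast [Nat.cast_sub (by omega : 1 ≤ p), Nat.cast_sub hss] at this
      linarith [this]
    have hspR : (sp p u : ℝ) ≤ (sp p r : ℝ) + (sp p s : ℝ) := by exact_mod_cast hsp
    have hden : (0:ℝ) < (p : ℝ) - 1 := by linarith
    have hvr : (padicValNat p r.factorial : ℝ) = ((r:ℝ) - sp p r)/((p:ℝ)-1) := by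
      rw [eq_div_iff hden.ne']; linarith [lr']
    have hvs : (padicValNat p s.factorial : ℝ) = ((s:ℝ) - sp p s)/((p:ℝ)-1) := by
      rw [eq_div_iff hden.ne']; linarith [ls']
    rw [hvr, hvs, neg_div, ← neg_div, ← add_div, ← add_div,
      div_le_div_iff_of_pos_right hden]
    linarith
  calc ‖(-1 : K) ^ s * π ^ (u - p ^ m * s + s) /
      (((u - p ^ m * s).factorial : K) * ((s.factorial : K)))‖
      = (p : ℝ) ^ ((-(r + s : ℝ) / ((p:ℝ) - 1)) + (padicValNat p r.factorial : ℝ)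
          + (padicValNat p s.factorial : ℝ)) := by
        rw [← hnorm]
  _ ≤ (p : ℝ) ^ (-(sp p u : ℝ) / ((p : ℝ) - 1)) :=
        Real.rpow_le_rpow_of_exponent_le hP1.le hexp

end CyclicMinorHelpers

/-- Valuation bound for a cyclic minor: for any injection `θ : ℤ/lℤ → (ℕ_{>0})^n`,
`‖M_θ‖ ≤ p^{−m·l·δ_p(D)}`, i.e. `M_θ ≡ 0 mod π^{m·l·(p−1)·δ_p(D)}`. -/


theorem cyclic_minor_bound (p m : ℕ) (hp : p.Prime) (hm : 1 ≤ m)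
    {K : Type} [NormedField K] [CharZero K]
    (hna : IsUltrametricDist K) (hpnorm : ‖(p : K)‖ = (p : ℝ)⁻¹)
    (π : K) (hπ : π ^ (p - 1) = -(p : K))
    {ι : Type} [Fintype ι] [Nonempty ι]
    (D : Finset (ι → ℕ)) (hD : D.Nonempty) (h0D : (fun _ => 0) ∉ D)
    (hcoord : ∀ k : ι, ∃ d ∈ D, 0 < d k)
    (γ : D → K) (hγ : ∀ d, ‖γ d‖ ≤ 1)
    (l : ℕ) (hl : 1 ≤ l) (θ : ZMod l → (ι → ℕ))
    (hθinj : Function.Injective θ) (hθpos : ∀ j k, 0 < θ j k) :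
    ‖(-1 : K) ^ (l - 1) *
        ∏ i ∈ Finset.range l,
          fcoefZ p m π D γ
            (fun k => (p : ℤ) ^ m * (θ (i : ZMod l) k : ℤ) - (θ ((i : ZMod l) + 1) k : ℤ))‖ ≤
      (p : ℝ) ^ (-((m : ℝ) * (l : ℝ) * density p D)) := by
  haveI := hna
  haveI : Fact p.Prime := ⟨hp⟩
  have hp2 : 2 ≤ p := hp.two_le
  have hP1 : (1:ℝ) < (p:ℝ) := by exact_mod_cast hp.one_lt
  have hP0 : (0:ℝ) < (p:ℝ) := by linarith
  have hden : (0:ℝ) < (p:ℝ) - 1 := by linarith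
  have hRHS0 : (0:ℝ) ≤ (p:ℝ) ^ (-((m:ℝ) * (l:ℝ) * density p D)) :=
    (Real.rpow_pos_of_pos hP0 _).le
  rw [norm_mul, norm_pow, norm_neg, norm_one, one_pow, one_mul]
  by_cases hneg : ∀ i ∈ Finset.range l, ∀ k : ι,
      (0:ℤ) ≤ (p : ℤ) ^ m * (θ (i : ZMod l) k : ℤ) - (θ ((i : ZMod l) + 1) k : ℤ)
  swap
  · push_neg at hneg
    obtain ⟨i, hi, k, hk⟩ := hneg
    rw [Finset.prod_eq_zero hi (by
      rw [fcoefZ, if_neg]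
      push_neg
      exact ⟨k, hk⟩), norm_zero]
    exact hRHS0
  -- main case
  have hre : ∀ i ∈ Finset.range l,
      fcoefZ p m π D γ
          (fun k => (p : ℤ) ^ m * (θ (i : ZMod l) k : ℤ) - (θ ((i : ZMod l) + 1) k : ℤ))
        = fcoef p m π D γ
          (fun k => ((p : ℤ) ^ m * (θ (i : ZMod l) k : ℤ)
              - (θ ((i : ZMod l) + 1) k : ℤ)).toNat) := by
    intro i hi
    rw [fcoefZ, if_pos (hneg i hi)]
  rw [Finset.prod_congr rfl hre]
  simp only [fcoef]
  rw [Finset.prod_sum]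
  apply IsUltrametricDist.norm_sum_le_of_forall_le_of_nonneg hRHS0
  intro F hF
  -- the combined solution
  classical
  set u : ℕ → D → ℕ := fun i => if hi : i ∈ Finset.range l then F i hi else 0 with hu
  have hux : ∀ x : {i // i ∈ Finset.range l}, u x.1 = F x.1 x.2 := by
    intro x; rw [hu]; exact dif_pos x.2
  have husol : ∀ i ∈ Finset.range l, ∀ k : ι,
      ((sigmaSum D (u i) k : ℤ))
        = (p : ℤ) ^ m * (θ (i : ZMod l) k : ℤ) - (θ ((i : ZMod l) + 1) k : ℤ) := by
    intro i hi k
    have hmem := Finset.mem_pi.mp hF i hi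
    rw [Finset.mem_filter] at hmem
    have : u i = F i hi := by rw [hu]; exact dif_pos hi
    rw [this, hmem.2 k]
    exact Int.toNat_of_nonneg (hneg i hi k)
  set U : D → ℕ := fun d => ∑ i ∈ Finset.range l, u i d * (p ^ m) ^ (l - 1 - i) with hU
  -- the key telescoping identity
  have key1 : ∀ k : ι, sigmaSum D U k = (p ^ (m * l) - 1) * θ (0 : ZMod l) k := by
    intro k
    have swapN : sigmaSum D U k
        = ∑ i ∈ Finset.range l, p ^ (m * (l - 1 - i)) * sigmaSum D (u i) k := by
      calc sigmaSum D U k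
          = ∑ d, (∑ i ∈ Finset.range l, u i d * (p ^ m) ^ (l - 1 - i)) * (d : ι → ℕ) k := rfl
      _ = ∑ d, ∑ i ∈ Finset.range l, u i d * (p ^ m) ^ (l - 1 - i) * (d : ι → ℕ) k := by
          exact Finset.sum_congr rfl fun d _ => Finset.sum_mul _ _ _
      _ = ∑ i ∈ Finset.range l, ∑ d, u i d * (p ^ m) ^ (l - 1 - i) * (d : ι → ℕ) k :=
          Finset.sum_comm
      _ = ∑ i ∈ Finset.range l, p ^ (m * (l - 1 - i)) * sigmaSum D (u i) k := by
          refine Finset.sum_congr rfl fun i _ => ?_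
          rw [sigmaSum, Finset.mul_sum, ← pow_mul]
          exact Finset.sum_congr rfl fun d _ => by ring
    have hZ : ((sigmaSum D U k : ℤ))
        = ((p:ℤ) ^ (m * l) - 1) * (θ (0 : ZMod l) k : ℤ) := by
      have tele : ∑ i ∈ Finset.range l,
          ((fun j => (p:ℤ) ^ (m * (l - j)) * (θ ((j : ℕ) : ZMod l) k : ℤ)) i
            - (fun j => (p:ℤ) ^ (m * (l - j)) * (θ ((j : ℕ) : ZMod l) k : ℤ)) (i + 1))
          = (p:ℤ) ^ (m * l) * (θ ((0 : ℕ) : ZMod l) k : ℤ)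
            - (p:ℤ) ^ (m * (l - l)) * (θ ((l : ℕ) : ZMod l) k : ℤ) := by
        exact Finset.sum_range_sub' _ l
      calc ((sigmaSum D U k : ℤ))
          = ∑ i ∈ Finset.range l, (p:ℤ) ^ (m * (l - 1 - i)) * (sigmaSum D (u i) k : ℤ) := by
            rw [swapN]; push_cast; rfl
      _ = ∑ i ∈ Finset.range l,
            ((p:ℤ) ^ (m * (l - i)) * (θ ((i : ℕ) : ZMod l) k : ℤ)
              - (p:ℤ) ^ (m * (l - (i + 1))) * (θ (((i + 1 : ℕ)) : ZMod l) k : ℤ)) := by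
            refine Finset.sum_congr rfl fun i hi => ?_
            rw [Finset.mem_range] at hi
            rw [husol i (Finset.mem_range.mpr hi) k]
            have e1 : l - i = (l - 1 - i) + 1 := by omega
            have e2 : l - (i + 1) = l - 1 - i := by omega
            have e3 : (((i + 1 : ℕ)) : ZMod l) = ((i : ℕ) : ZMod l) + 1 := by push_cast; ring
            rw [e1, e2, e3, mul_add, mul_one, pow_add, pow_mul]
            ring
      _ = (p:ℤ) ^ (m * l) * (θ ((0 : ℕ) : ZMod l) k : ℤ)
            - (p:ℤ) ^ (m * (l - l)) * (θ ((l : ℕ) : ZMod l) k : ℤ) := tele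
      _ = ((p:ℤ) ^ (m * l) - 1) * (θ (0 : ZMod l) k : ℤ) := by
            rw [Nat.sub_self, mul_zero, pow_zero, one_mul, ZMod.natCast_self, Nat.cast_zero]
            ring
    have hc : (((p ^ (m * l) - 1) * θ (0 : ZMod l) k : ℕ) : ℤ)
        = ((p:ℤ) ^ (m * l) - 1) * (θ (0 : ZMod l) k : ℤ) := by
      have h1 : 1 ≤ p ^ (m * l) := Nat.one_le_pow _ _ (by omega)
      push_cast [Nat.cast_sub h1]
      ring
    exact_mod_cast hZ.trans hc.symm
  -- fold down to a genuine element of E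
  have hml : 1 ≤ m * l := le_trans (by norm_num) (Nat.mul_le_mul hm hl)
  choose U' hle hmod hsps hz using fun d : D => fold_exists hp hml (U d)
  have hpml : 2 ≤ p ^ (m * l) := by
    calc (2:ℕ) = 2 ^ 1 := rfl
    _ ≤ p ^ 1 := Nat.pow_le_pow_left hp2 1
    _ ≤ p ^ (m * l) := Nat.pow_le_pow_right (by omega) hml
  have hmemE : memE p D (m * l) U' := by
    constructor
    · exact hle
    · intro k
      have hdvdU : (p ^ (m * l) - 1) ∣ sigmaSum D U k := Dvd.intro _ (key1 k).symm
      constructor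
      · have h1 : ((p ^ (m * l) - 1 : ℕ) : ℤ)
            ∣ ((sigmaSum D U k : ℤ) - (sigmaSum D U' k : ℤ)) := by
          have e : (sigmaSum D U k : ℤ) - (sigmaSum D U' k : ℤ)
              = ∑ d, ((U d : ℤ) - (U' d : ℤ)) * ((d : ι → ℕ) k : ℤ) := by
            rw [sigmaSum, sigmaSum]
            push_cast
            rw [← Finset.sum_sub_distrib]
            exact Finset.sum_congr rfl fun d _ => by ring
          rw [e]
          exact Finset.dvd_sum fun d _ => Dvd.dvd.mul_right ((hmod d).dvd) _
        have h2 : ((p ^ (m * l) - 1 : ℕ) : ℤ) ∣ (sigmaSum D U k : ℤ) := by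
          exact_mod_cast hdvdU
        have h3 : ((p ^ (m * l) - 1 : ℕ) : ℤ) ∣ (sigmaSum D U' k : ℤ) := by
          have := dvd_sub h2 h1
          simpa using this
        exact_mod_cast h3
      · have hU0 : sigmaSum D U k ≠ 0 := by
          rw [key1 k]
          exact Nat.mul_ne_zero (by omega) (hθpos 0 k).ne'
        have hex : ¬ ∀ d : D, U d * (d : ι → ℕ) k = 0 := by
          intro h
          exact hU0 (Finset.sum_eq_zero fun d _ => h d)
        push_neg at hex
        obtain ⟨d, hd⟩ := hex
        rw [Nat.mul_ne_zero_iff] at hd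
        have hU'd : U' d ≠ 0 := fun h => hd.1 ((hz d).mp h)
        have : 0 < U' d * (d : ι → ℕ) k :=
          Nat.mul_pos (Nat.pos_of_ne_zero hU'd) (Nat.pos_of_ne_zero hd.2)
        calc 0 < U' d * (d : ι → ℕ) k := this
        _ ≤ sigmaSum D U' k := by
            rw [sigmaSum]
            exact Finset.single_le_sum (f := fun e : D => U' e * (e : ι → ℕ) k)
              (fun e _ => Nat.zero_le _) (Finset.mem_univ d)
  -- digit sum chain
  set S : ℕ := ∑ i ∈ Finset.range l, ∑ d, sp p (u i d) with hS
  have hsDpS : sDp p D (m * l) ≤ S := by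
    have h1 : sDp p D (m * l) ≤ spU p D U' := Nat.sInf_le ⟨U', hmemE, rfl⟩
    have h2 : spU p D U' ≤ ∑ d, sp p (U d) := Finset.sum_le_sum fun d _ => hsps d
    have h3 : ∀ d : D, sp p (U d) ≤ ∑ i ∈ Finset.range l, sp p (u i d) := by
      intro d
      calc sp p (U d) ≤ ∑ i ∈ Finset.range l, sp p (u i d * (p ^ m) ^ (l - 1 - i)) :=
            sp_sum_le hp _ _
      _ = ∑ i ∈ Finset.range l, sp p (u i d) := by
            refine Finset.sum_congr rfl fun i _ => ?_
            rw [mul_comm, ← pow_mul, sp_pow_mul hp2]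
    have h4 : ∑ d, sp p (U d) ≤ ∑ d : D, ∑ i ∈ Finset.range l, sp p (u i d) :=
      Finset.sum_le_sum fun d _ => h3 d
    have h5 : ∑ d : D, ∑ i ∈ Finset.range l, sp p (u i d) = S := Finset.sum_comm
    omega
  -- density bound
  have hdb : ((m : ℝ) * (l : ℝ)) * density p D ≤ (S : ℝ) / ((p:ℝ) - 1) := by
    have hXmem : ((sDp p D (m * l) : ℝ) / ((m * l : ℕ) : ℝ))
        ∈ { x : ℝ | ∃ r : ℕ, 1 ≤ r ∧ x = (sDp p D r : ℝ) / (r : ℝ) } := ⟨m * l, hml, rfl⟩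
    have hbdd : BddBelow { x : ℝ | ∃ r : ℕ, 1 ≤ r ∧ x = (sDp p D r : ℝ) / (r : ℝ) } := by
      refine ⟨0, fun x hx => ?_⟩
      obtain ⟨r, hr, rfl⟩ := hx
      positivity
    have hsinf : sInf { x : ℝ | ∃ r : ℕ, 1 ≤ r ∧ x = (sDp p D r : ℝ) / (r : ℝ) }
        ≤ (sDp p D (m * l) : ℝ) / ((m * l : ℕ) : ℝ) := csInf_le hbdd hXmem
    have hd1 : density p D
        ≤ (1 / ((p:ℝ) - 1)) * ((sDp p D (m * l) : ℝ) / ((m * l : ℕ) : ℝ)) := by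
      rw [density]
      exact mul_le_mul_of_nonneg_left hsinf (by positivity)
    have hml0 : (0:ℝ) < ((m * l : ℕ) : ℝ) := by exact_mod_cast hml
    have hmlcast : ((m * l : ℕ) : ℝ) = (m : ℝ) * (l : ℝ) := by push_cast; ring
    have hsS : (sDp p D (m * l) : ℝ) ≤ (S : ℝ) := by exact_mod_cast hsDpS
    calc ((m : ℝ) * (l : ℝ)) * density p D
        ≤ ((m : ℝ) * (l : ℝ)) * ((1 / ((p:ℝ) - 1)) * ((sDp p D (m * l) : ℝ)
            / ((m * l : ℕ) : ℝ))) := by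
          apply mul_le_mul_of_nonneg_left hd1
          positivity
    _ = (sDp p D (m * l) : ℝ) / ((p:ℝ) - 1) := by
          rw [hmlcast] at *
          field_simp
    _ ≤ (S : ℝ) / ((p:ℝ) - 1) := by
          exact div_le_div_of_nonneg_right hsS hden.le
  -- per-term norm bound
  have hBnn : ∀ n : ℕ, (0:ℝ) ≤ (p : ℝ) ^ (-(sp p n : ℝ) / ((p : ℝ) - 1)) :=
    fun n => (Real.rpow_pos_of_pos hP0 _).le
  have hinner : ∀ x : {i // i ∈ Finset.range l},
      ‖∏ d, lam p m π (F x.1 x.2 d) * γ d ^ (F x.1 x.2 d)‖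
        ≤ ∏ d : D, (p : ℝ) ^ (-(sp p (u x.1 d) : ℝ) / ((p : ℝ) - 1)) := by
    intro x
    rw [norm_prod]
    refine Finset.prod_le_prod (fun d _ => norm_nonneg _) fun d _ => ?_
    rw [norm_mul, ← hux x]
    calc ‖lam p m π (u x.1 d)‖ * ‖γ d ^ (u x.1 d)‖
        ≤ ((p : ℝ) ^ (-(sp p (u x.1 d) : ℝ) / ((p : ℝ) - 1))) * 1 := by
          apply mul_le_mul (norm_lam_le hp hna hpnorm hπ _) _ (norm_nonneg _) (hBnn _)
          rw [norm_pow]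
          exact pow_le_one₀ (norm_nonneg _) (hγ d)
    _ = (p : ℝ) ^ (-(sp p (u x.1 d) : ℝ) / ((p : ℝ) - 1)) := mul_one _
  calc ‖∏ x ∈ (Finset.range l).attach,
        ∏ d, lam p m π (F x.1 x.2 d) * γ d ^ (F x.1 x.2 d)‖
      = ∏ x ∈ (Finset.range l).attach,
          ‖∏ d, lam p m π (F x.1 x.2 d) * γ d ^ (F x.1 x.2 d)‖ := norm_prod _ _
  _ ≤ ∏ x ∈ (Finset.range l).attach,
        ∏ d : D, (p : ℝ) ^ (-(sp p (u x.1 d) : ℝ) / ((p : ℝ) - 1)) :=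
      Finset.prod_le_prod (fun x _ => norm_nonneg _) (fun x _ => hinner x)
  _ = (p : ℝ) ^ (∑ x ∈ (Finset.range l).attach,
        ∑ d : D, (-(sp p (u x.1 d) : ℝ) / ((p : ℝ) - 1))) := by
      rw [Real.rpow_sum_of_pos hP0]
      exact Finset.prod_congr rfl fun x _ => (Real.rpow_sum_of_pos hP0 _ _).symm
  _ = (p : ℝ) ^ (-(S : ℝ) / ((p:ℝ) - 1)) := by
      congr 1
      rw [Finset.sum_attach (Finset.range l)
        (fun i => ∑ d : D, (-(sp p (u i d) : ℝ) / ((p : ℝ) - 1)))]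
      calc ∑ i ∈ Finset.range l, ∑ d : D, (-(sp p (u i d) : ℝ) / ((p : ℝ) - 1))
          = ∑ i ∈ Finset.range l, (-(∑ d : D, (sp p (u i d) : ℝ)) / ((p : ℝ) - 1)) := by
            refine Finset.sum_congr rfl fun i _ => ?_
            rw [← Finset.sum_div, ← Finset.sum_neg_distrib]
      _ = -(∑ i ∈ Finset.range l, ∑ d : D, (sp p (u i d) : ℝ)) / ((p : ℝ) - 1) := by
            rw [← Finset.sum_div, ← Finset.sum_neg_distrib]
      _ = -(S : ℝ) / ((p:ℝ) - 1) := by rw [hS]; push_cast; ring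
  _ ≤ (p : ℝ) ^ (-((m : ℝ) * (l : ℝ) * density p D)) := by
      apply Real.rpow_le_rpow_of_exponent_le hP1.le
      rw [neg_div, neg_le_neg_iff]
      exact hdb
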